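/- For n ≥ 3 and 3 ≤ m ≤ n+2, the red/blue coloring of K_{2n} whose red graph is the disjoint union 2K_n of two complete graphs on n vertices and whose blue graph is the complete bipartite graph K_{n,n} contains no red K_{1,n} and no blue K_{1,m}+e. -/

import Mathlib

open SimpleGraph

/-- `Contains G H` : the graph `G` contains a copy of `H`. -/
def Contains {V W : Type*} (G : SimpleGraph V) (H : SimpleGraph W) : Prop :=
  ∃ f : W → V, Function.Injective f ∧ ∀ a b, H.Adj a b → G.Adj (f a) (f b)

/-- The star `K_{1,n}` on `n+1` vertices: vertex `0` is joined to all others. -/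
def starG (n : ℕ) : SimpleGraph (Fin (n + 1)) :=
  SimpleGraph.fromRel (fun a _ => a = 0)

/-- `K_{1,m}+e` on `m+1` vertices: vertex `0` joined to all others, plus the edge `{1,2}`. -/
def starPlusE (m : ℕ) : SimpleGraph (Fin (m + 1)) :=
  SimpleGraph.fromRel (fun a b => a = 0 ∨ (a = 1 ∧ b = 2))

theorem stmt_7 (n m : ℕ) (hn : 3 ≤ n) (hm : 3 ≤ m) (hmn : m ≤ n + 2) :
    ¬ Contains (SimpleGraph.fromRel (fun a b : Fin (2 * n) =>
        (a.val < n ↔ b.val < n))) (starG n) ∧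
    ¬ Contains (SimpleGraph.fromRel (fun a b : Fin (2 * n) =>
        (a.val < n ↔ b.val < n)))ᶜ (starPlusE m) := by
  constructor
  · rintro ⟨f, hinj, hadj⟩
    have key : ∀ i : Fin (n+1), ((f i).val < n ↔ (f 0).val < n) := by
      intro i
      by_cases h : i = 0
      · subst h; tauto
      · have hAdj : (starG n).Adj 0 i := by
          rw [starG, SimpleGraph.fromRel_adj]
          exact ⟨fun h' => h h'.symm, Or.inl rfl⟩
        have := hadj 0 i hAdj
        rw [SimpleGraph.fromRel_adj] at this
        tauto
    by_cases h0 : (f 0).val < n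
    · have hg : Function.Injective (fun i => (⟨(f i).val, (key i).mpr h0⟩ : Fin n)) := by
        intro i j hij
        apply hinj
        apply Fin.ext
        simpa using congrArg Fin.val hij
      have := Fintype.card_le_of_injective _ hg
      simp at this
    · have hg : Function.Injective (fun i => (⟨(f i).val - n, by
        have h1 := (f i).isLt
        have h2 : ¬ (f i).val < n := fun hc => h0 ((key i).mp hc)
        omega⟩ : Fin n)) := by
        intro i j hij
        apply hinj
        apply Fin.ext
        have hi : ¬ (f i).val < n := fun hc => h0 ((key i).mp hc)
        have hj : ¬ (f j).val < n := fun hc => h0 ((key j).mp hc)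
        have := congrArg Fin.val hij
        simp only at this
        omega
      have := Fintype.card_le_of_injective _ hg
      simp at this
  · rintro ⟨f, hinj, hadj⟩
    have hv1 : (1 : Fin (m+1)).val = 1 := by
      rw [Fin.val_one']; exact Nat.mod_eq_of_lt (by omega)
    have hv2 : (2 : Fin (m+1)).val = 2 := by
      have h := Fin.val_natCast 2 (m+1)
      open Fin.NatCast in
      have : ((2 : ℕ) : Fin (m+1)) = (2 : Fin (m+1)) := by norm_cast
      rw [this] at h
      rw [h]; exact Nat.mod_eq_of_lt (by omega)
    have hv0 : (0 : Fin (m+1)).val = 0 := rfl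
    have h01 : (0 : Fin (m+1)) ≠ 1 := by
      intro h; have := congrArg Fin.val h; rw [hv0, hv1] at this; omega
    have h02 : (0 : Fin (m+1)) ≠ 2 := by
      intro h; have := congrArg Fin.val h; rw [hv0, hv2] at this; omega
    have h12 : (1 : Fin (m+1)) ≠ 2 := by
      intro h; have := congrArg Fin.val h; rw [hv1, hv2] at this; omega
    have a01 : (starPlusE m).Adj 0 1 := by
      rw [starPlusE, SimpleGraph.fromRel_adj]
      exact ⟨h01, Or.inl (Or.inl rfl)⟩
    have a02 : (starPlusE m).Adj 0 2 := by
      rw [starPlusE, SimpleGraph.fromRel_adj]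
      exact ⟨h02, Or.inl (Or.inl rfl)⟩
    have a12 : (starPlusE m).Adj 1 2 := by
      rw [starPlusE, SimpleGraph.fromRel_adj]
      exact ⟨h12, Or.inl (Or.inr ⟨rfl, rfl⟩)⟩
    have b01 := hadj 0 1 a01
    have b02 := hadj 0 2 a02
    have b12 := hadj 1 2 a12
    rw [SimpleGraph.compl_adj, SimpleGraph.fromRel_adj] at b01 b02 b12
    have n01 : ¬((f 0).val < n ↔ (f 1).val < n) := fun h => b01.2 ⟨b01.1, Or.inl h⟩
    have n02 : ¬((f 0).val < n ↔ (f 2).val < n) := fun h => b02.2 ⟨b02.1, Or.inl h⟩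
    have n12 : ¬((f 1).val < n ↔ (f 2).val < n) := fun h => b12.2 ⟨b12.1, Or.inl h⟩
    tauto
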